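/- Let S be a simple, non-elementary Cu-semigroup satisfying axioms (O5) and (O6), and let λ : S → [0, ∞] be a functional (an additive, order-preserving, sup-preserving map with λ(0) = 0). Assume Glimm halving: for every nonzero a ∈ S and every n ≥ 1 there exists nonzero x ∈ S with n·x ≤ a. If there exists a ∈ S with 0 < λ(a) < ∞, then λ(S) = [0, ∞]; otherwise λ(S) ⊆ {0, ∞}. -/

import Mathlib

open scoped ENNReal

/-- The sequential way-below relation in a partially ordered monoid. -/
def CuWayBelow {S : Type*} [Preorder S] (a b : S) : Prop :=
  ∀ f : ℕ → S, Monotone f → ∀ s : S, IsLUB (Set.range f) s → b ≤ s → ∃ n, a ≤ f n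

/-- Greedy step in `ℝ≥0∞`: adding `⌊(t-v)/ε⌋` copies of `ε` to `v` stays `≤ t`
and gets within `ε` of `t`. -/
lemma ennreal_greedy_step (t v ε : ℝ≥0∞) (hvt : v ≤ t) (ht : t < ⊤)
    (hε0 : 0 < ε) (hεt : ε < ⊤) :
    v + (⌊((t - v) / ε).toReal⌋₊ : ℝ≥0∞) * ε ≤ t ∧
    t ≤ v + (⌊((t - v) / ε).toReal⌋₊ : ℝ≥0∞) * ε + ε := by
  set r := ((t - v) / ε).toReal with hr
  have hfin : (t - v) / ε ≠ ⊤ :=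
    (ENNReal.div_lt_top (tsub_le_self.trans_lt ht).ne hε0.ne').ne
  have hofr : ENNReal.ofReal r = (t - v) / ε := ENNReal.ofReal_toReal hfin
  have h1 : (⌊r⌋₊ : ℝ≥0∞) ≤ (t - v) / ε := by
    rw [← hofr, ← ENNReal.ofReal_natCast]
    exact ENNReal.ofReal_le_ofReal (Nat.floor_le ENNReal.toReal_nonneg)
  have h2 : (t - v) / ε ≤ (⌊r⌋₊ : ℝ≥0∞) + 1 := by
    rw [← hofr]
    calc ENNReal.ofReal r ≤ ENNReal.ofReal ((⌊r⌋₊ : ℝ) + 1) :=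
          ENNReal.ofReal_le_ofReal (Nat.lt_floor_add_one r).le
      _ = (⌊r⌋₊ : ℝ≥0∞) + 1 := by
          rw [ENNReal.ofReal_add (by positivity) zero_le_one, ENNReal.ofReal_natCast,
            ENNReal.ofReal_one]
  have hcancel : (t - v) / ε * ε = t - v := ENNReal.div_mul_cancel hε0.ne' hεt.ne
  constructor
  · have : (⌊r⌋₊ : ℝ≥0∞) * ε ≤ t - v := by
      calc (⌊r⌋₊ : ℝ≥0∞) * ε ≤ (t - v) / ε * ε := mul_le_mul_left h1 ε
        _ = t - v := hcancel
    calc v + (⌊r⌋₊ : ℝ≥0∞) * ε ≤ v + (t - v) := add_le_add_right this v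
      _ = t := add_tsub_cancel_of_le hvt
  · have : t - v ≤ (⌊r⌋₊ : ℝ≥0∞) * ε + ε := by
      calc t - v = (t - v) / ε * ε := hcancel.symm
        _ ≤ ((⌊r⌋₊ : ℝ≥0∞) + 1) * ε := mul_le_mul_left h2 ε
        _ = (⌊r⌋₊ : ℝ≥0∞) * ε + ε := by rw [add_mul, one_mul]
    calc t = v + (t - v) := (add_tsub_cancel_of_le hvt).symm
      _ ≤ v + ((⌊r⌋₊ : ℝ≥0∞) * ε + ε) := add_le_add_right this v
      _ = v + (⌊r⌋₊ : ℝ≥0∞) * ε + ε := (add_assoc _ _ _).symm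

/-- Let `S` be a simple, non-elementary Cu-semigroup satisfying
(O5) and (O6), and `λ : S → [0,∞]` a functional. Assuming Glimm halving, if
some `a` has `0 < λ(a) < ∞` then `λ` is surjective onto `[0,∞]`; otherwise
`λ` only takes the values `0` and `∞`. -/
theorem functional_range_simple_Cu {S : Type*} [AddCommMonoid S] [PartialOrder S]
    [CovariantClass S S (· + ·) (· ≤ ·)]
    (hpos : ∀ a : S, 0 ≤ a)
    (hO1 : ∀ f : ℕ → S, Monotone f → ∃ s, IsLUB (Set.range f) s)
    (hO2 : ∀ a : S, ∃ f : ℕ → S, Monotone f ∧ (∀ n, CuWayBelow (f n) (f (n + 1))) ∧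
      IsLUB (Set.range f) a)
    (hO3 : ∀ a' a b' b : S, CuWayBelow a' a → CuWayBelow b' b →
      CuWayBelow (a' + b') (a + b))
    (hO4 : ∀ f g : ℕ → S, Monotone f → Monotone g → ∀ s t : S,
      IsLUB (Set.range f) s → IsLUB (Set.range g) t →
      IsLUB (Set.range fun n => f n + g n) (s + t))
    (hO5 : ∀ a' a b' b c : S, a + b ≤ c → CuWayBelow a' a → CuWayBelow b' b →
      ∃ x : S, a' + x ≤ c ∧ c ≤ a + x ∧ CuWayBelow b' x)
    (hO6 : ∀ a' a b c : S, CuWayBelow a' a → a ≤ b + c →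
      ∃ e f : S, a' ≤ e + f ∧ e ≤ a ∧ e ≤ b ∧ f ≤ a ∧ f ≤ c)
    (hsimple : ∀ a : S, a ≠ 0 → ∀ b s : S,
      IsLUB (Set.range fun n : ℕ => n • a) s → b ≤ s)
    (hnonelem : ∀ a : S, a ≠ 0 → ∃ b : S, b ≠ 0 ∧ b ≤ a ∧ b ≠ a)
    (lam : S → ℝ≥0∞) (hlam0 : lam 0 = 0)
    (hlamadd : ∀ a b : S, lam (a + b) = lam a + lam b)
    (hlammono : Monotone lam)
    (hlamsup : ∀ f : ℕ → S, Monotone f → ∀ s : S, IsLUB (Set.range f) s →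
      lam s = ⨆ n, lam (f n))
    (hglimm : ∀ a : S, a ≠ 0 → ∀ n : ℕ, 1 ≤ n → ∃ x : S, x ≠ 0 ∧ n • x ≤ a) :
    ((∃ a : S, 0 < lam a ∧ lam a < ⊤) → Set.range lam = Set.univ) ∧
    ((¬ ∃ a : S, 0 < lam a ∧ lam a < ⊤) → Set.range lam ⊆ {0, ⊤}) := by
  constructor
  · rintro ⟨a, ha0, hatop⟩
    have ha : a ≠ 0 := by rintro rfl; rw [hlam0] at ha0; exact lt_irrefl _ ha0
    have lam_nsmul : ∀ (n : ℕ) (x : S), lam (n • x) = n * lam x := by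
      intro n x
      induction n with
      | zero => simp [hlam0]
      | succ n ih => rw [succ_nsmul, hlamadd, ih]; push_cast; ring
    have smul_mono : ∀ x : S, Monotone fun n : ℕ => n • x := by
      intro x
      refine monotone_nat_of_le_succ fun n => ?_
      rw [succ_nsmul]
      calc n • x = n • x + 0 := (add_zero _).symm
        _ ≤ n • x + x := add_le_add_right (hpos x) _
    have lam_pos : ∀ y : S, y ≠ 0 → 0 < lam y := by
      intro y hy
      rcases eq_or_ne (lam y) 0 with hy0 | hy0
      · exfalso
        obtain ⟨s, hs⟩ := hO1 _ (smul_mono y)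
        have hle : a ≤ s := hsimple y hy a s hs
        have hs0 : lam s = 0 := by
          rw [hlamsup _ (smul_mono y) s hs]
          simp [lam_nsmul, hy0]
        have : lam a ≤ 0 := hs0 ▸ hlammono hle
        exact ha0.ne' (le_antisymm this zero_le)
      · exact zero_lt_iff.mpr hy0
    have htopmem : (⊤ : ℝ≥0∞) ∈ Set.range lam := by
      obtain ⟨s, hs⟩ := hO1 _ (smul_mono a)
      refine ⟨s, ?_⟩
      rw [hlamsup _ (smul_mono a) s hs]
      simp only [lam_nsmul]
      rw [← ENNReal.iSup_mul, ENNReal.iSup_natCast, ENNReal.top_mul ha0.ne']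
    have key : ∀ t : ℝ≥0∞, t < ⊤ → t ∈ Set.range lam := by
      intro t ht
      have hy : ∀ n : ℕ, ∃ y : S, y ≠ 0 ∧ lam y ≤ lam a / (n + 1) := by
        intro n
        obtain ⟨x, hx0, hxa⟩ := hglimm a ha (n + 1) (Nat.le_add_left 1 n)
        refine ⟨x, hx0, ?_⟩
        rw [ENNReal.le_div_iff_mul_le (Or.inl (by norm_num))
          (Or.inl (by simp [ENNReal.natCast_ne_top]))]
        calc lam x * (n + 1) = ((n + 1 : ℕ) : ℝ≥0∞) * lam x := by push_cast; ring
          _ = lam ((n + 1) • x) := (lam_nsmul (n + 1) x).symm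
          _ ≤ lam a := hlammono hxa
      choose y hy0 hyle using hy
      have hylt : ∀ n, lam (y n) < ⊤ := fun n =>
        (hyle n).trans_lt (ENNReal.div_lt_top hatop.ne (by norm_num))
      set c : ℕ → S := fun n =>
        Nat.rec (0 : S)
          (fun m cm => cm + (⌊((t - lam cm) / lam (y m)).toReal⌋₊ : ℕ) • y m) n with hc
      have hc0 : c 0 = 0 := rfl
      have hcs : ∀ n, c (n + 1)
          = c n + (⌊((t - lam (c n)) / lam (y n)).toReal⌋₊ : ℕ) • y n := fun n => rfl
      have hinv : ∀ n, lam (c n) ≤ t := by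
        intro n
        induction n with
        | zero => rw [hc0, hlam0]; exact zero_le
        | succ n ih =>
          rw [hcs, hlamadd, lam_nsmul]
          exact (ennreal_greedy_step t _ _ ih ht (lam_pos _ (hy0 n)) (hylt n)).1
      have hinv2 : ∀ n, t ≤ lam (c (n + 1)) + lam (y n) := by
        intro n
        rw [hcs, hlamadd, lam_nsmul]
        exact (ennreal_greedy_step t _ _ (hinv n) ht (lam_pos _ (hy0 n)) (hylt n)).2
      have hcmono : Monotone c := by
        refine monotone_nat_of_le_succ fun n => ?_
        rw [hcs]
        calc c n = c n + 0 := (add_zero _).symm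
          _ ≤ _ := add_le_add_right (hpos _) _
      obtain ⟨s, hs⟩ := hO1 c hcmono
      refine ⟨s, ?_⟩
      rw [hlamsup c hcmono s hs]
      refine le_antisymm (iSup_le hinv) ?_
      refine ENNReal.le_of_forall_pos_le_add fun δ hδ _ => ?_
      obtain ⟨n, hn⟩ : ∃ n : ℕ, lam a / (n + 1) ≤ (δ : ℝ≥0∞) := by
        have hδ0 : (δ : ℝ≥0∞) ≠ 0 := by exact_mod_cast hδ.ne'
        obtain ⟨n, hn⟩ := ENNReal.exists_nat_gt
          (ENNReal.div_lt_top hatop.ne hδ0).ne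
        refine ⟨n, ?_⟩
        rw [ENNReal.div_le_iff (by norm_num) (by simp)]
        calc lam a ≤ (n : ℝ≥0∞) * δ := by
              rw [← ENNReal.div_le_iff hδ0 ENNReal.coe_ne_top]; exact hn.le
          _ ≤ ((n : ℝ≥0∞) + 1) * δ := mul_le_mul_left (le_add_of_nonneg_right zero_le_one) _
          _ = (δ : ℝ≥0∞) * ((n : ℕ) + 1 : ℝ≥0∞) := by push_cast; ring
      calc t ≤ lam (c (n + 1)) + lam (y n) := hinv2 n
        _ ≤ (⨆ m, lam (c m)) + (δ : ℝ≥0∞) :=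
          add_le_add (le_iSup (fun m => lam (c m)) (n + 1)) ((hyle n).trans hn)
    ext t
    simp only [Set.mem_univ, iff_true]
    rcases eq_or_ne t ⊤ with rfl | htne
    · exact htopmem
    · exact key t (lt_top_iff_ne_top.mpr htne)
  · intro h x hx
    obtain ⟨b, rfl⟩ := hx
    push_neg at h
    rcases eq_or_ne (lam b) 0 with h0 | h0
    · exact Or.inl h0
    · exact Or.inr (top_le_iff.mp (h b (zero_lt_iff.mpr h0)))
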